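/- Let n ≥ 1 and let W be a real matrix indexed by pairs (i,j) ∈ (Fin n × Fin n) that is symmetric (W_{(i,j),(k,l)} = W_{(k,l),(i,j)}) and entrywise nonnegative. Let X be an n×n real matrix with nonnegative entries such that f(X) > 0 and, for every (i,j) with X_{ij} > 0, the denominator f(X)·(r_i(X)+c_j(X)) is positive, and let Y be the matrix produced by one step of the SPM multiplicative update, Y_{ij} = X_{ij}·sqrt( M(X)_{ij} / ( f(X)·( r_i(X) + c_j(X) ) ) ). Then the Lagrangian with multiplier α = f(X) does not decrease: f(Y) − f(X)·g(Y) ≥ f(X) − f(X)·g(X). (Equivalently, L(Y) ≥ L(X) where L(Z) = f(Z) − α·(g(Z) − 1) with α = f(X).) -/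

import Mathlib

open BigOperators Matrix

private lemma spm_aux_log (a d : ℝ) (ha : 0 ≤ a) (hd : 0 < d) :
    a - d ≤ a * Real.log (a / d) := by
  rcases ha.eq_or_lt with h | h
  · rw [← h]; simp; linarith
  · have h1 : Real.log (d / a) ≤ d / a - 1 := Real.log_le_sub_one_of_pos (by positivity)
    have h2 : Real.log (a / d) = -Real.log (d / a) := by
      rw [← Real.log_inv]; congr 1; field_simp
    have h3 := mul_le_mul_of_nonneg_left h1 h.le
    have h4 : a * (d / a) = d := by field_simp
    nlinarith

private lemma spm_cs {n : ℕ} (w s : Fin n → ℝ) (hw : ∀ j, 0 ≤ w j) :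
    (∑ j, w j * s j) ^ 2 ≤ (∑ j, w j) * ∑ j, w j * s j ^ 2 := by
  have h := Finset.sum_mul_sq_le_sq_mul_sq Finset.univ
    (fun j => Real.sqrt (w j)) (fun j => Real.sqrt (w j) * s j)
  have e1 : ∀ j : Fin n, Real.sqrt (w j) * (Real.sqrt (w j) * s j) = w j * s j := fun j => by
    rw [← mul_assoc, Real.mul_self_sqrt (hw j)]
  have e2 : ∀ j : Fin n, Real.sqrt (w j) ^ 2 = w j := fun j => Real.sq_sqrt (hw j)
  have e3 : ∀ j : Fin n, (Real.sqrt (w j) * s j) ^ 2 = w j * s j ^ 2 := fun j => by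
    rw [mul_pow, Real.sq_sqrt (hw j)]
  simp only [e1, e2, e3] at h
  exact h

/-- Quadratic matching objective f(X) = Σ_{(i,j),(k,l)} W_{(i,j),(k,l)} X_{ij} X_{kl}. -/
noncomputable def spmF (n : ℕ) (W : Matrix (Fin n × Fin n) (Fin n × Fin n) ℝ)
    (X : Matrix (Fin n) (Fin n) ℝ) : ℝ :=
  ∑ p : Fin n × Fin n, ∑ q : Fin n × Fin n, W p q * X p.1 p.2 * X q.1 q.2

/-- Gradient matrix M(X)_{ij} = Σ_{(k,l)} W_{(i,j),(k,l)} X_{kl}. -/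
noncomputable def spmM (n : ℕ) (W : Matrix (Fin n × Fin n) (Fin n × Fin n) ℝ)
    (X : Matrix (Fin n) (Fin n) ℝ) : Matrix (Fin n) (Fin n) ℝ :=
  fun i j => ∑ q : Fin n × Fin n, W (i, j) q * X q.1 q.2

/-- Row sums r_i(X) = Σ_j X_{ij}. -/
noncomputable def spmR (n : ℕ) (X : Matrix (Fin n) (Fin n) ℝ) (i : Fin n) : ℝ :=
  ∑ j, X i j

/-- Column sums c_j(X) = Σ_i X_{ij}. -/
noncomputable def spmC (n : ℕ) (X : Matrix (Fin n) (Fin n) ℝ) (j : Fin n) : ℝ :=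
  ∑ i, X i j

/-- Constraint function g(X) = Σ_i r_i(X)² + Σ_j c_j(X)². -/
noncomputable def spmG (n : ℕ) (X : Matrix (Fin n) (Fin n) ℝ) : ℝ :=
  ∑ i, (spmR n X i) ^ 2 + ∑ j, (spmC n X j) ^ 2

/-- One step of the SPM multiplicative update. -/
noncomputable def spmUpdate (n : ℕ) (W : Matrix (Fin n × Fin n) (Fin n × Fin n) ℝ)
    (X : Matrix (Fin n) (Fin n) ℝ) : Matrix (Fin n) (Fin n) ℝ :=
  fun i j => X i j *
    Real.sqrt (spmM n W X i j / (spmF n W X * (spmR n X i + spmC n X j)))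

private lemma spm_split {n : ℕ} (X : Matrix (Fin n) (Fin n) ℝ) (s : Fin n → Fin n → ℝ) :
    ∑ p : Fin n × Fin n, X p.1 p.2 * (spmR n X p.1 + spmC n X p.2) * s p.1 p.2
      = (∑ i, spmR n X i * ∑ j, X i j * s i j) + ∑ j, spmC n X j * ∑ i, X i j * s i j := by
  rw [Fintype.sum_prod_type]
  have h : ∀ i j, X i j * (spmR n X i + spmC n X j) * s i j
      = spmR n X i * (X i j * s i j) + spmC n X j * (X i j * s i j) := fun i j => by ring
  simp_rw [h, Finset.sum_add_distrib, ← Finset.mul_sum]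
  congr 1
  rw [Finset.sum_comm]
  exact Finset.sum_congr rfl fun j _ => (Finset.mul_sum _ _ _).symm

/-- one step of the SPM multiplicative update does not decrease the
Lagrangian `L(Z) = f(Z) − α·(g(Z) − 1)` with multiplier `α = f(X)`. -/
theorem spm_update_lagrangian_monotone (n : ℕ) (hn : 1 ≤ n)
    (W : Matrix (Fin n × Fin n) (Fin n × Fin n) ℝ)
    (hWsym : ∀ p q : Fin n × Fin n, W p q = W q p)
    (hWnn : ∀ p q : Fin n × Fin n, 0 ≤ W p q)
    (X : Matrix (Fin n) (Fin n) ℝ)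
    (hXnn : ∀ i j, 0 ≤ X i j)
    (hf : 0 < spmF n W X)
    (hden : ∀ i j, 0 < X i j → 0 < spmF n W X * (spmR n X i + spmC n X j))
    (Y : Matrix (Fin n) (Fin n) ℝ)
    (hY : ∀ i j, Y i j = X i j *
      Real.sqrt (spmM n W X i j / (spmF n W X * (spmR n X i + spmC n X j)))) :
    spmF n W Y - spmF n W X * spmG n Y ≥ spmF n W X - spmF n W X * spmG n X := by
  set α := spmF n W X with hα
  set t : Fin n → Fin n → ℝ := fun i j =>
    Real.sqrt (spmM n W X i j / (α * (spmR n X i + spmC n X j))) with htdef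
  have hYt : ∀ i j, Y i j = X i j * t i j := fun i j => hY i j
  have hMnn : ∀ i j, 0 ≤ spmM n W X i j := fun i j =>
    Finset.sum_nonneg fun q _ => mul_nonneg (hWnn _ _) (hXnn _ _)
  have htnn : ∀ i j, 0 ≤ t i j := fun i j => Real.sqrt_nonneg _
  -- positivity of t at supported entries
  have htpos : ∀ p q : Fin n × Fin n, 0 < W p q * X p.1 p.2 * X q.1 q.2 → 0 < t p.1 p.2 := by
    intro p q hc
    have hXp : 0 < X p.1 p.2 := by
      rcases (hXnn p.1 p.2).eq_or_lt with h | h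
      · exfalso; rw [← h] at hc; simp at hc
      · exact h
    have hWq : 0 < W p q * X q.1 q.2 := by
      rcases (mul_nonneg (hWnn p q) (hXnn q.1 q.2)).eq_or_lt with h | h
      · exfalso; nlinarith
      · exact h
    have hM : 0 < spmM n W X p.1 p.2 := by
      have := Finset.single_le_sum (f := fun q' : Fin n × Fin n => W p q' * X q'.1 q'.2)
        (fun q' _ => mul_nonneg (hWnn _ _) (hXnn _ _)) (Finset.mem_univ q)
      have heq : spmM n W X p.1 p.2 = ∑ q' : Fin n × Fin n, W p q' * X q'.1 q'.2 := by
        simp [spmM]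
      rw [heq]; exact lt_of_lt_of_le hWq this
    have hD := hden p.1 p.2 hXp
    exact Real.sqrt_pos.mpr (div_pos hM hD)
  -- Step 1: lower bound on f(Y)
  have h1 : α + ∑ p : Fin n × Fin n,
      2 * (spmM n W X p.1 p.2 * X p.1 p.2 * Real.log (t p.1 p.2)) ≤ spmF n W Y := by
    have hterm : ∀ p q : Fin n × Fin n,
        W p q * X p.1 p.2 * X q.1 q.2
          * (1 + Real.log (t p.1 p.2) + Real.log (t q.1 q.2))
          ≤ W p q * Y p.1 p.2 * Y q.1 q.2 := by
      intro p q
      have hc : 0 ≤ W p q * X p.1 p.2 * X q.1 q.2 :=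
        mul_nonneg (mul_nonneg (hWnn _ _) (hXnn _ _)) (hXnn _ _)
      have hYY : W p q * Y p.1 p.2 * Y q.1 q.2
          = W p q * X p.1 p.2 * X q.1 q.2 * (t p.1 p.2 * t q.1 q.2) := by
        rw [hYt, hYt]; ring
      rcases hc.eq_or_lt with h | h
      · rw [hYY, ← h]; simp
      · have htp := htpos p q h
        have htq : 0 < t q.1 q.2 := by
          apply htpos q p
          have : W q p * X q.1 q.2 * X p.1 p.2 = W p q * X p.1 p.2 * X q.1 q.2 := by
            rw [hWsym]; ring
          rw [this]; exact h
        have hz : 0 < t p.1 p.2 * t q.1 q.2 := mul_pos htp htq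
        have hlog := Real.log_le_sub_one_of_pos hz
        rw [Real.log_mul htp.ne' htq.ne'] at hlog
        rw [hYY]
        have hineq : 1 + Real.log (t p.1 p.2) + Real.log (t q.1 q.2)
            ≤ t p.1 p.2 * t q.1 q.2 := by linarith
        exact mul_le_mul_of_nonneg_left hineq h.le
    have hMeq : ∀ p : Fin n × Fin n,
        spmM n W X p.1 p.2 = ∑ q : Fin n × Fin n, W p q * X q.1 q.2 := by
      intro p; simp [spmM]
    have hB : ∀ p : Fin n × Fin n,
        ∑ q : Fin n × Fin n, W p q * X p.1 p.2 * X q.1 q.2 * Real.log (t p.1 p.2)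
          = spmM n W X p.1 p.2 * X p.1 p.2 * Real.log (t p.1 p.2) := by
      intro p
      rw [hMeq p, Finset.sum_mul, Finset.sum_mul]
      exact Finset.sum_congr rfl fun q _ => by ring
    have hC : ∑ p : Fin n × Fin n, ∑ q : Fin n × Fin n,
          W p q * X p.1 p.2 * X q.1 q.2 * Real.log (t q.1 q.2)
        = ∑ p : Fin n × Fin n,
          spmM n W X p.1 p.2 * X p.1 p.2 * Real.log (t p.1 p.2) := by
      rw [Finset.sum_comm]
      refine Finset.sum_congr rfl fun q _ => ?_
      rw [hMeq q, Finset.sum_mul, Finset.sum_mul]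
      refine Finset.sum_congr rfl fun p _ => ?_
      rw [hWsym p q]; try ring
    have hid : ∑ p : Fin n × Fin n, ∑ q : Fin n × Fin n,
          W p q * X p.1 p.2 * X q.1 q.2
            * (1 + Real.log (t p.1 p.2) + Real.log (t q.1 q.2))
        = α + ∑ p : Fin n × Fin n,
            2 * (spmM n W X p.1 p.2 * X p.1 p.2 * Real.log (t p.1 p.2)) := by
      have e : ∀ p q : Fin n × Fin n,
          W p q * X p.1 p.2 * X q.1 q.2
            * (1 + Real.log (t p.1 p.2) + Real.log (t q.1 q.2))
          = W p q * X p.1 p.2 * X q.1 q.2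
            + W p q * X p.1 p.2 * X q.1 q.2 * Real.log (t p.1 p.2)
            + W p q * X p.1 p.2 * X q.1 q.2 * Real.log (t q.1 q.2) := fun p q => by ring
      simp_rw [e, Finset.sum_add_distrib]
      rw [hC, Finset.sum_congr rfl fun p _ => hB p]
      have h2sum : ∑ p : Fin n × Fin n,
          2 * (spmM n W X p.1 p.2 * X p.1 p.2 * Real.log (t p.1 p.2))
          = (∑ p : Fin n × Fin n, spmM n W X p.1 p.2 * X p.1 p.2 * Real.log (t p.1 p.2))
            + ∑ p : Fin n × Fin n, spmM n W X p.1 p.2 * X p.1 p.2 * Real.log (t p.1 p.2) := by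
        rw [← Finset.sum_add_distrib]
        exact Finset.sum_congr rfl fun p _ => two_mul _
      rw [h2sum, hα]
      simp only [spmF]
      ring
    calc α + ∑ p : Fin n × Fin n,
          2 * (spmM n W X p.1 p.2 * X p.1 p.2 * Real.log (t p.1 p.2))
        = ∑ p : Fin n × Fin n, ∑ q : Fin n × Fin n,
            W p q * X p.1 p.2 * X q.1 q.2
              * (1 + Real.log (t p.1 p.2) + Real.log (t q.1 q.2)) := hid.symm
      _ ≤ ∑ p : Fin n × Fin n, ∑ q : Fin n × Fin n, W p q * Y p.1 p.2 * Y q.1 q.2 :=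
          Finset.sum_le_sum fun p _ => Finset.sum_le_sum fun q _ => hterm p q
      _ = spmF n W Y := rfl
  -- Step 2: upper bound on g(Y)
  have h2 : spmG n Y ≤ ∑ p : Fin n × Fin n,
      X p.1 p.2 * (spmR n X p.1 + spmC n X p.2) * (t p.1 p.2) ^ 2 := by
    have hsplit := spm_split X (fun i j => (t i j) ^ 2)
    have hrow : ∀ i, (∑ j, X i j * t i j) ^ 2 ≤ spmR n X i * ∑ j, X i j * (t i j) ^ 2 :=
      fun i => spm_cs (fun j => X i j) (fun j => t i j) (fun j => hXnn i j)
    have hcol : ∀ j, (∑ i, X i j * t i j) ^ 2 ≤ spmC n X j * ∑ i, X i j * (t i j) ^ 2 :=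
      fun j => spm_cs (fun i => X i j) (fun i => t i j) (fun i => hXnn i j)
    have hgY : spmG n Y = ∑ i, (∑ j, X i j * t i j) ^ 2 + ∑ j, (∑ i, X i j * t i j) ^ 2 := by
      simp only [spmG, spmR, spmC]
      congr 1 <;> · refine Finset.sum_congr rfl fun _ _ => ?_
                    congr 1
                    exact Finset.sum_congr rfl fun _ _ => hYt _ _
    rw [hgY, hsplit]
    exact add_le_add (Finset.sum_le_sum fun i _ => hrow i)
      (Finset.sum_le_sum fun j _ => hcol j)
  -- Step 3: identity for g(X)
  have h3 : spmG n X = ∑ p : Fin n × Fin n,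
      X p.1 p.2 * (spmR n X p.1 + spmC n X p.2) := by
    have hsplit := spm_split X (fun _ _ => (1 : ℝ))
    simp only [mul_one] at hsplit
    rw [hsplit]
    simp only [spmG, spmR, spmC, sq]
  -- Step 4: per-entry inequality
  have h4 : α * (∑ p : Fin n × Fin n,
        X p.1 p.2 * (spmR n X p.1 + spmC n X p.2) * (t p.1 p.2) ^ 2)
      - α * (∑ p : Fin n × Fin n, X p.1 p.2 * (spmR n X p.1 + spmC n X p.2))
      ≤ ∑ p : Fin n × Fin n,
        2 * (spmM n W X p.1 p.2 * X p.1 p.2 * Real.log (t p.1 p.2)) := by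
    rw [Finset.mul_sum, Finset.mul_sum, ← Finset.sum_sub_distrib]
    refine Finset.sum_le_sum fun p _ => ?_
    rcases (hXnn p.1 p.2).eq_or_lt with hz | hXp
    · rw [← hz]; simp
    · have hD : 0 < α * (spmR n X p.1 + spmC n X p.2) := hden p.1 p.2 hXp
      have hMD : 0 ≤ spmM n W X p.1 p.2 / (α * (spmR n X p.1 + spmC n X p.2)) :=
        div_nonneg (hMnn _ _) hD.le
      have hsq : (t p.1 p.2) ^ 2 = spmM n W X p.1 p.2 / (α * (spmR n X p.1 + spmC n X p.2)) :=
        Real.sq_sqrt hMD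
      have hlog : Real.log (t p.1 p.2)
          = Real.log (spmM n W X p.1 p.2 / (α * (spmR n X p.1 + spmC n X p.2))) / 2 :=
        Real.log_sqrt hMD
      have key := spm_aux_log (spmM n W X p.1 p.2) (α * (spmR n X p.1 + spmC n X p.2))
        (hMnn _ _) hD
      rw [hsq, hlog]
      have hcancel : α * (spmR n X p.1 + spmC n X p.2)
          * (spmM n W X p.1 p.2 / (α * (spmR n X p.1 + spmC n X p.2)))
          = spmM n W X p.1 p.2 := by
        have hRC : spmR n X p.1 + spmC n X p.2 ≠ 0 := by
          intro h; rw [h, mul_zero] at hD; exact lt_irrefl _ hD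
        field_simp
      nlinarith [mul_le_mul_of_nonneg_left key hXp.le]
  -- combine
  have h2' := mul_le_mul_of_nonneg_left h2 hf.le
  rw [h3]
  linarith [h1, h2', h4]
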